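/- Let n ≥ 2, let W = (Fin n → ZMod 2) ⋊ Equiv.Perm (Fin n) be the Coxeter group of type B_n in its signed-permutation realization, let R be the closure under conjugation of {t_i = (e_i, 1) : i} ∪ {r_{ij} = (0, swap i j) : i ≠ j}, let ℓ be word length with respect to R, and let w = t_1 · r_{12} · r_{23} ⋯ r_{(n−1)n} be the standard Coxeter element. If u lies in the interval [1,w] = {u : ℓ(u) + ℓ(u⁻¹w) = ℓ(w)} and u w = w u, then u = 1 or u = w. -/

import Mathlib

open Multiplicative

/-- The automorphism of `Multiplicative (Fin n → A)` permuting coordinates by `π`. -/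
def permMulAut {n : ℕ} {A : Type*} [AddCommGroup A] (π : Equiv.Perm (Fin n)) :
    MulAut (Multiplicative (Fin n → A)) where
  toFun v := ofAdd fun i => toAdd v (π⁻¹ i)
  invFun v := ofAdd fun i => toAdd v (π i)
  left_inv v := by
    refine Multiplicative.toAdd.injective (funext fun i => ?_)
    simp
  right_inv v := by
    refine Multiplicative.toAdd.injective (funext fun i => ?_)
    simp
  map_mul' a b := rfl

/-- The coordinate-permutation action of `Equiv.Perm (Fin n)` on `Multiplicative (Fin n → A)`. -/
def permAction (n : ℕ) (A : Type*) [AddCommGroup A] :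
    Equiv.Perm (Fin n) →* MulAut (Multiplicative (Fin n → A)) where
  toFun := permMulAut
  map_one' := by
    refine MulEquiv.ext fun v => ?_
    refine Multiplicative.toAdd.injective (funext fun i => ?_)
    simp [permMulAut]
  map_mul' π σ := by
    refine MulEquiv.ext fun v => ?_
    refine Multiplicative.toAdd.injective (funext fun i => ?_)
    simp [permMulAut]

/-- The Coxeter group of type `B_n` in its signed-permutation realization
`(Fin n → ZMod 2) ⋊ Equiv.Perm (Fin n)`. -/
abbrev CoxB (n : ℕ) := Multiplicative (Fin n → ZMod 2) ⋊[permAction n (ZMod 2)] Equiv.Perm (Fin n)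

/-- The sign changes `t_i` and coordinate transpositions `r_{ij}` generating `Cox(B_n)`. -/
def coxBGens (n : ℕ) : Set (CoxB n) :=
  {x | (∃ i : Fin n, x = SemidirectProduct.inl (ofAdd (Pi.single i (1 : ZMod 2)))) ∨
       (∃ i j : Fin n, i ≠ j ∧ x = SemidirectProduct.inr (Equiv.swap i j))}

/-- The set of reflections of `Cox(B_n)`: the closure of the generators under conjugation. -/
def coxBRefl (n : ℕ) : Set (CoxB n) :=
  {x | ∃ s ∈ coxBGens n, ∃ g : CoxB n, x = g * s * g⁻¹}

/-- Word length with respect to a generating set `S`. -/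
noncomputable def wordLength {G : Type*} [Group G] (S : Set G) (g : G) : ℕ :=
  sInf {k | ∃ l : List G, l.length = k ∧ (∀ x ∈ l, x ∈ S) ∧ l.prod = g}

/-- The standard Coxeter element `w = t_1 r_{12} r_{23} ⋯ r_{(n−1)n}` of `Cox(B_n)`. -/
def coxBCoxeterElt (m : ℕ) : CoxB (m + 2) :=
  SemidirectProduct.inl (φ := permAction (m + 2) (ZMod 2)) (ofAdd (Pi.single (0 : Fin (m + 2)) (1 : ZMod 2))) *
    ((List.finRange (m + 1)).map
      (fun i => (SemidirectProduct.inr (Equiv.swap i.castSucc i.succ) : CoxB (m + 2)))).prod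

namespace CoxBAux

noncomputable section

open SemidirectProduct

/-- sign character -/
def sgn (z : ZMod 2) : ℚ := if z = 0 then 1 else -1

lemma sgn_add (a b : ZMod 2) : sgn (a + b) = sgn a * sgn b := by
  have h2 : ∀ z : ZMod 2, z = 0 ∨ z = 1 := by decide
  rcases h2 a with ha | ha <;> rcases h2 b with hb | hb <;>
    subst ha <;> subst hb <;> simp [sgn, (by decide : (1+1:ZMod 2) = 0)] <;> norm_num

lemma sgn_zero : sgn 0 = 1 := rfl

lemma sgn_one : sgn 1 = -1 := rfl

variable {n : ℕ}

/-- underlying linear map of the representation -/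
def rhoL (g : CoxB n) : (Fin n → ℚ) →ₗ[ℚ] (Fin n → ℚ) where
  toFun x := fun i => sgn (toAdd g.left i) * x (g.right⁻¹ i)
  map_add' x y := by funext i; simp; ring
  map_smul' c x := by funext i; simp; ring

lemma rhoL_apply (g : CoxB n) (x : Fin n → ℚ) (i : Fin n) :
    rhoL g x i = sgn (toAdd g.left i) * x (g.right⁻¹ i) := rfl

lemma rho_apply' (g : CoxB n) (x : Fin n → ℚ) (i : Fin n) :
    rhoL g x i = sgn (toAdd g.left i) * x (g.right⁻¹ i) := rfl

/-- The signed-permutation representation of `CoxB n` on `ℚ^n`. -/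
def rho : CoxB n →* Module.End ℚ (Fin n → ℚ) where
  toFun := rhoL
  map_one' := by
    apply LinearMap.ext; intro x; funext i
    show sgn (toAdd (1 : CoxB n).left i) * x ((1 : CoxB n).right⁻¹ i) = x i
    simp [sgn_zero]
  map_mul' a b := by
    apply LinearMap.ext; intro x; funext i
    have hleft : toAdd (a * b).left i =
        toAdd a.left i + toAdd b.left (a.right⁻¹ i) := rfl
    have hright : ((a * b).right)⁻¹ i = b.right⁻¹ (a.right⁻¹ i) := rfl
    show rhoL (a*b) x i = rhoL a (rhoL b x) i
    rw [rhoL_apply, hleft, hright, sgn_add, rhoL_apply, rhoL_apply]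
    ring

lemma rho_apply (g : CoxB n) (x : Fin n → ℚ) (i : Fin n) :
    (rho g : Module.End ℚ (Fin n → ℚ)) x i = sgn (toAdd g.left i) * x (g.right⁻¹ i) := rfl

end
end CoxBAux
namespace CoxBAux
noncomputable section
open SemidirectProduct Equiv

/-- the underlying n-cycle of the Coxeter element -/
def cperm (m : ℕ) : Equiv.Perm (Fin (m+2)) :=
  ((List.finRange (m+1)).map (fun i => Equiv.swap i.castSucc i.succ)).prod

lemma coxeterElt_eq (m : ℕ) :
    coxBCoxeterElt m = inl (ofAdd (Pi.single (0 : Fin (m+2)) (1 : ZMod 2))) * inr (cperm m) := by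
  unfold coxBCoxeterElt cperm
  congr 1
  have h1 : (fun i : Fin (m+1) => (inr (swap i.castSucc i.succ) : CoxB (m+2))) =
      (fun σ => (inr σ : CoxB (m+2))) ∘ (fun i : Fin (m+1) => swap i.castSucc i.succ) := rfl
  rw [h1, ← List.map_map]
  exact ((inr : Equiv.Perm (Fin (m+2)) →* CoxB (m+2)).map_list_prod _).symm

lemma take_prod_apply (m : ℕ) : ∀ k, k ≤ m+1 → ∀ x : Fin (m+2),
    (((((List.finRange (m+1)).take k).map
        (fun i : Fin (m+1) => Equiv.swap i.castSucc i.succ)).prod x).val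
      = if x.val < k then x.val + 1 else if x.val = k then 0 else x.val) := by
  intro k
  induction k with
  | zero =>
    intro _ x
    simp only [List.take_zero, List.map_nil, List.prod_nil, Equiv.Perm.coe_one, id_eq]
    split
    · omega
    · split <;> omega
  | succ k ih =>
    intro hk x
    have hK : k < m + 1 := by omega
    have hk' : k ≤ m + 1 := by omega
    have hklt : k < (List.finRange (m+1)).length := by simp; omega
    have hK2 : k < m + 2 := by omega
    have hK3 : k + 1 < m + 2 := by omega
    rw [List.take_succ, List.getElem?_eq_getElem hklt]
    have hget : (List.finRange (m+1))[k] = (⟨k, hK⟩ : Fin (m+1)) := by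
      simp [List.getElem_finRange, Fin.ext_iff]
    rw [hget]
    simp only [Option.toList_some, List.map_append, List.map_cons, List.map_nil,
      List.prod_append, List.prod_cons, List.prod_nil, mul_one, Equiv.Perm.mul_apply]
    have hcs : (⟨k, hK⟩ : Fin (m+1)).castSucc = (⟨k, hK2⟩ : Fin (m+2)) := rfl
    have hsc : (⟨k, hK⟩ : Fin (m+1)).succ = (⟨k+1, hK3⟩ : Fin (m+2)) := rfl
    rw [hcs, hsc]
    by_cases h1 : x = (⟨k, hK2⟩ : Fin (m+2))
    · rw [h1, Equiv.swap_apply_left, ih hk' ⟨k+1, hK3⟩]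
      simp [Fin.ext_iff]
    · by_cases h2 : x = (⟨k+1, hK3⟩ : Fin (m+2))
      · rw [h2, Equiv.swap_apply_right, ih hk' ⟨k, hK2⟩]
        simp
      · rw [Equiv.swap_apply_of_ne_of_ne h1 h2, ih hk' x]
        rw [Fin.ext_iff] at h1 h2
        simp only [] at h1 h2 ⊢
        split
        · split <;> omega
        · split <;> omega

lemma cperm_apply {m : ℕ} (x : Fin (m+2)) : cperm m x = x + 1 := by
  have h := take_prod_apply m (m+1) le_rfl x
  have htake : List.take (m+1) (List.finRange (m+1)) = List.finRange (m+1) := by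
    have := List.take_length (l := List.finRange (m+1))
    simpa using this
  rw [htake] at h
  apply Fin.ext
  rw [show ((((List.finRange (m+1)).map
      (fun i : Fin (m+1) => Equiv.swap i.castSucc i.succ)).prod x)) = cperm m x from rfl] at h
  rw [h, Fin.val_add_one]
  by_cases hl : x = Fin.last (m+1)
  · have : x.val = m + 1 := by rw [hl]; rfl
    simp [hl, this]
  · have : x.val ≠ m + 1 := fun hc => hl (Fin.ext hc)
    have hlt : x.val < m + 2 := x.isLt
    simp [hl]
    omega

end
end CoxBAux
namespace CoxBAux
noncomputable section
open SemidirectProduct Equiv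
open Fin.NatCast

lemma cpow_apply {m : ℕ} (k : ℕ) (x : Fin (m+2)) : ((cperm m)^k) x = x + (k : Fin (m+2)) := by
  induction k with
  | zero => simp
  | succ k ih =>
    rw [pow_succ', Equiv.Perm.mul_apply, ih, cperm_apply, Nat.cast_add_one, add_assoc]

lemma cperm_inv_apply {m : ℕ} (x : Fin (m+2)) : (cperm m)⁻¹ x = x - 1 := by
  apply (cperm m).injective
  rw [show ∀ (e : Equiv.Perm (Fin (m+2))) y, e (e⁻¹ y) = y from fun e y => e.apply_symm_apply y, cperm_apply, sub_add_cancel]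

/-- indicator vector of `[0,j)` -/
def chi (m j : ℕ) : Fin (m+2) → ZMod 2 := fun i => if i.val < j then 1 else 0

lemma w_pow (m : ℕ) : ∀ j, j ≤ m+2 →
    (coxBCoxeterElt m)^j = inl (ofAdd (chi m j)) * inr ((cperm m)^j) := by
  intro j
  induction j with
  | zero =>
    intro _
    have : chi m 0 = 0 := by funext i; simp [chi]
    simp [this, ofAdd_zero]
  | succ j ih =>
    intro hj
    have hj' : j ≤ m + 2 := by omega
    have hjlt : j < m + 2 := by omega
    have key : ∀ (a e' : Multiplicative (Fin (m+2) → ZMod 2)) (g h : Equiv.Perm (Fin (m+2))),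
        (inl a * inr g * inl e' * inr h : CoxB (m+2))
          = inl (a * (permAction (m+2) (ZMod 2)) g e') * inr (g*h) := by
      intro a e' g h
      rw [map_mul, map_mul, inl_aut]
      simp only [mul_assoc]
      congr 2
      rw [← map_mul, ← map_mul, inv_mul_cancel_left]
    rw [pow_succ, ih hj', coxeterElt_eq, ← mul_assoc, key, ← pow_succ]
    congr 2
    refine Multiplicative.toAdd.injective (funext fun i => ?_)
    simp only [toAdd_mul, toAdd_ofAdd, Pi.add_apply]
    have happ2 : toAdd ((permAction (m+2) (ZMod 2)) ((cperm m)^j) (ofAdd (Pi.single (0 : Fin (m+2)) (1 : ZMod 2)))) i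
        = (Pi.single (0 : Fin (m+2)) (1 : ZMod 2) : Fin (m+2) → ZMod 2) (((cperm m)^j)⁻¹ i) := rfl
    rw [happ2]
    have hinv : ((cperm m)^j)⁻¹ i = i - (j : Fin (m+2)) := by
      apply ((cperm m)^j).injective
      rw [show ∀ (e : Equiv.Perm (Fin (m+2))) y, e (e⁻¹ y) = y from fun e y => e.apply_symm_apply y, cpow_apply, sub_add_cancel]
    rw [hinv]
    have hsingle : (Pi.single (0 : Fin (m+2)) (1 : ZMod 2) : Fin (m+2) → ZMod 2) (i - (j : Fin (m+2)))
        = if i.val = j then 1 else 0 := by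
      rcases eq_or_ne (i - (j : Fin (m+2))) 0 with h | h
      · have hij : i = (j : Fin (m+2)) := by
          have := sub_eq_zero.mp h; exact this
        have : i.val = j := by rw [hij, Fin.val_cast_of_lt hjlt]
        rw [h, this]
        simp
      · have hij : i ≠ (j : Fin (m+2)) := fun hc => h (by rw [hc]; simp)
        have : i.val ≠ j := fun hc => hij (by
          apply Fin.ext; rw [Fin.val_cast_of_lt hjlt]; exact hc)
        rw [Pi.single_eq_of_ne h, if_neg this]
    rw [hsingle]
    unfold chi
    rcases lt_trichotomy i.val j with h | h | h
    · rw [if_pos h, if_neg (by omega), if_pos (by omega), add_zero]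
    · rw [if_neg (by omega), if_pos h, if_pos (by omega), zero_add]
    · rw [if_neg (by omega), if_neg (by omega), if_neg (by omega), add_zero]

lemma w_pow_n (m : ℕ) : (coxBCoxeterElt m)^(m+2) = inl (ofAdd (fun _ => (1 : ZMod 2))) := by
  rw [w_pow m (m+2) le_rfl]
  have h1 : chi m (m+2) = fun _ => (1 : ZMod 2) := by
    funext i; simp [chi, i.isLt]
  have h2 : (cperm m)^(m+2) = 1 := by
    apply Equiv.ext; intro x
    rw [cpow_apply]
    simp [Fin.natCast_self]
  rw [h1, h2, map_one, mul_one]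

lemma w_pow_2n (m : ℕ) : (coxBCoxeterElt m)^(2*(m+2)) = 1 := by
  rw [two_mul, pow_add, w_pow_n, ← map_mul, ← ofAdd_add]
  have : ((fun _ => (1 : ZMod 2)) + (fun _ => (1 : ZMod 2))) = (0 : Fin (m+2) → ZMod 2) := by
    funext i; simp; decide
  rw [this, ofAdd_zero, map_one]

end
end CoxBAux
namespace CoxBAux
noncomputable section
open SemidirectProduct Equiv
open Fin.NatCast

lemma rightHom_w (m : ℕ) : rightHom (coxBCoxeterElt m) = cperm m := by
  rw [coxeterElt_eq, map_mul, rightHom_inl, rightHom_inr, one_mul]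

lemma commute_w_eq_pow {m : ℕ} (u : CoxB (m+2))
    (hcomm : u * coxBCoxeterElt m = coxBCoxeterElt m * u) :
    ∃ j : ℕ, u = (coxBCoxeterElt m)^j := by
  set w := coxBCoxeterElt m with hw
  set σ := rightHom u with hσdef
  have hσc : σ * cperm m = cperm m * σ := by
    have := congrArg rightHom hcomm
    rw [map_mul, map_mul, rightHom_w] at this
    exact this
  have hpt : ∀ x : Fin (m+2), σ (x + 1) = σ x + 1 := by
    intro x
    have h1 : σ (cperm m x) = cperm m (σ x) := by
      have := congrArg (fun π : Equiv.Perm (Fin (m+2)) => π x) hσc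
      simpa [Equiv.Perm.mul_apply] using this
    rw [cperm_apply, cperm_apply] at h1
    exact h1
  have hiter : ∀ t : ℕ, σ ((t : Fin (m+2))) = (t : Fin (m+2)) + σ 0 := by
    intro t
    induction t with
    | zero => simp
    | succ t ih =>
      have hc : ((t+1 : ℕ) : Fin (m+2)) = (t : Fin (m+2)) + 1 := by
        push_cast; ring
      rw [hc, hpt, ih, add_right_comm]
  set k := (σ 0).val with hk
  have hσ : σ = (cperm m)^k := by
    apply Equiv.ext; intro x
    rw [cpow_apply]
    have : σ x = x + σ 0 := by
      conv_lhs => rw [← Fin.cast_val_eq_self x]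
      rw [hiter x.val, Fin.cast_val_eq_self x]
    rw [this, hk, Fin.cast_val_eq_self]
  set v := u * (w^k)⁻¹ with hv
  have hvr : rightHom v = 1 := by
    rw [hv, map_mul, map_inv, map_pow, rightHom_w, ← hσdef, hσ, mul_inv_cancel]
  have hvl : v = inl v.left := by
    conv_lhs => rw [← inl_left_mul_inr_right v]
    rw [show v.right = rightHom v from rfl, hvr, map_one, mul_one]
  have hcw : Commute u w := hcomm
  have hcm : Commute v w := Commute.mul_left hcw (((Commute.refl w).pow_left k).inv_left)
  -- extract the vector equation
  have hbeq : (permAction (m+2) (ZMod 2)) (cperm m) v.left = v.left := by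
    have h2 : inl v.left * w = w * inl v.left := by rw [← hvl]; exact hcm
    rw [hw, coxeterElt_eq] at h2
    have key : ∀ (e' : Multiplicative (Fin (m+2) → ZMod 2)) (g : Equiv.Perm (Fin (m+2))),
        (inr g : CoxB (m+2)) * inl e' = inl ((permAction (m+2) (ZMod 2)) g e') * inr g := by
      intro e' g
      rw [inl_aut, mul_assoc, ← map_mul, inv_mul_cancel, map_one, mul_one]
    rw [mul_assoc, key, ← mul_assoc, ← mul_assoc, ← map_mul, ← map_mul] at h2
    have h3 := mul_right_cancel h2
    have h4 := inl_injective h3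
    have h5 : v.left * ofAdd (Pi.single (0 : Fin (m+2)) (1 : ZMod 2))
        = ofAdd (Pi.single (0 : Fin (m+2)) (1 : ZMod 2)) * (permAction (m+2) (ZMod 2)) (cperm m) v.left := h4
    rw [mul_comm] at h5
    exact (mul_left_cancel h5).symm
  have hbpt : ∀ i : Fin (m+2), toAdd v.left (i - 1) = toAdd v.left i := by
    intro i
    have := congrFun (congrArg toAdd hbeq) i
    rw [show toAdd ((permAction (m+2) (ZMod 2)) (cperm m) v.left) i
        = toAdd v.left ((cperm m)⁻¹ i) from rfl, cperm_inv_apply] at this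
    exact this
  have hconst : ∀ i : Fin (m+2), toAdd v.left i = toAdd v.left 0 := by
    have hnat : ∀ t : ℕ, toAdd v.left ((t : Fin (m+2))) = toAdd v.left 0 := by
      intro t
      induction t with
      | zero => simp
      | succ t ih =>
        have hc : ((t+1 : ℕ) : Fin (m+2)) = (t : Fin (m+2)) + 1 := by push_cast; ring
        rw [hc, ← ih]
        have := hbpt ((t : Fin (m+2)) + 1)
        rw [add_sub_cancel_right] at this
        exact this.symm
    intro i
    conv_lhs => rw [← Fin.cast_val_eq_self i]
    exact hnat i.val
  have hz : toAdd v.left 0 = 0 ∨ toAdd v.left 0 = 1 := by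
    generalize toAdd v.left 0 = z
    revert z; decide
  rcases hz with h0 | h1
  · refine ⟨k, ?_⟩
    have : v = 1 := by
      rw [hvl]
      have : v.left = 1 := by
        refine Multiplicative.toAdd.injective (funext fun i => ?_)
        rw [hconst i, h0]; rfl
      rw [this, map_one]
    have hu : u = w^k := by
      have := congrArg (fun x => x * w^k) this
      simpa [hv, mul_assoc] using this
    exact hu
  · refine ⟨(m+2) + k, ?_⟩
    have hvw : v = w^(m+2) := by
      rw [hvl, w_pow_n]
      congr 1
      refine Multiplicative.toAdd.injective (funext fun i => ?_)
      rw [hconst i, h1]; rfl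
    have hu : u = w^(m+2) * w^k := by
      have := congrArg (fun x => x * w^k) hvw
      simpa [hv, mul_assoc] using this
    rw [hu, ← pow_add]

end
end CoxBAux
namespace CoxBAux
noncomputable section
open SemidirectProduct Equiv LinearMap

variable {n : ℕ}

/-- rank of `ρ(g) - 1` -/
def dd (g : CoxB n) : ℕ :=
  Module.finrank ℚ (LinearMap.range ((rho g : Module.End ℚ (Fin n → ℚ)) - 1))

lemma dd_one : dd (1 : CoxB n) = 0 := by
  unfold dd
  rw [map_one, sub_self, LinearMap.range_zero, finrank_bot]

lemma dd_mul_le (g h : CoxB n) : dd (g * h) ≤ dd g + dd h := by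
  have hexp : ((rho (g*h) : Module.End ℚ (Fin n → ℚ)) - 1)
      = ((rho g : Module.End ℚ (Fin n → ℚ)) - 1) * rho h + ((rho h : Module.End ℚ (Fin n → ℚ)) - 1) := by
    rw [map_mul]
    rw [sub_mul, one_mul]
    abel
  have hle : LinearMap.range ((rho (g*h) : Module.End ℚ (Fin n → ℚ)) - 1)
      ≤ LinearMap.range ((rho g : Module.End ℚ (Fin n → ℚ)) - 1)
        ⊔ LinearMap.range ((rho h : Module.End ℚ (Fin n → ℚ)) - 1) := by
    rintro y ⟨x, rfl⟩
    rw [hexp, LinearMap.add_apply, Module.End.mul_apply]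
    exact Submodule.add_mem _
      (Submodule.mem_sup_left ⟨(rho h : Module.End ℚ (Fin n → ℚ)) x, rfl⟩)
      (Submodule.mem_sup_right ⟨x, rfl⟩)
  have hm := Submodule.finrank_mono (M := Fin n → ℚ) hle
  have hs := Submodule.finrank_sup_add_finrank_inf_eq
    (LinearMap.range ((rho g : Module.End ℚ (Fin n → ℚ)) - 1))
    (LinearMap.range ((rho h : Module.End ℚ (Fin n → ℚ)) - 1))
  unfold dd
  omega

lemma dd_gens_le_one {s : CoxB n} (hs : s ∈ coxBGens n) : dd s ≤ 1 := by
  have hspan : ∀ v : Fin n → ℚ,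
      LinearMap.range ((rho s : Module.End ℚ (Fin n → ℚ)) - 1) ≤ Submodule.span ℚ {v} →
      dd s ≤ 1 := by
    intro v hv
    have h1 := Submodule.finrank_mono (M := Fin n → ℚ) hv
    have h2 : Module.finrank ℚ (Submodule.span ℚ ({v} : Set (Fin n → ℚ))) ≤ 1 := by
      rcases eq_or_ne v 0 with h | h
      · rw [h, Submodule.span_zero_singleton, finrank_bot]
        exact Nat.zero_le 1
      · rw [finrank_span_singleton h]
    unfold dd
    omega
  rcases hs with ⟨i, rfl⟩ | ⟨i, j, hij, rfl⟩
  · apply hspan (Pi.single i (1:ℚ))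
    rintro y ⟨x, rfl⟩
    rw [Submodule.mem_span_singleton]
    refine ⟨-2 * x i, ?_⟩
    funext k
    simp only [Pi.smul_apply, LinearMap.sub_apply, Module.End.one_apply, Pi.sub_apply,
      smul_eq_mul, rho_apply]
    rw [show toAdd ((inl (ofAdd (Pi.single i (1 : ZMod 2))) : CoxB n)).left = Pi.single i (1 : ZMod 2) from rfl]
    rw [show ((inl (ofAdd (Pi.single i (1 : ZMod 2))) : CoxB n)).right⁻¹ = 1 from rfl]
    rcases eq_or_ne k i with h | h
    · subst h
      rw [Pi.single_eq_same, Pi.single_eq_same, sgn_one]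
      show (-2 * x k) * 1 = -1 * x k - x k
      ring
    · rw [Pi.single_eq_of_ne h, Pi.single_eq_of_ne h, sgn_zero]
      show (-2 * x i) * 0 = 1 * x k - x k
      ring
  · apply hspan (Pi.single i (1:ℚ) - Pi.single j (1:ℚ))
    rintro y ⟨x, rfl⟩
    rw [Submodule.mem_span_singleton]
    refine ⟨x j - x i, ?_⟩
    funext k
    simp only [Pi.smul_apply, LinearMap.sub_apply, Module.End.one_apply, Pi.sub_apply,
      smul_eq_mul, rho_apply]
    rw [show toAdd ((inr (Equiv.swap i j) : CoxB n)).left = 0 from rfl]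
    rw [show ((inr (Equiv.swap i j) : CoxB n)).right⁻¹ = Equiv.swap i j from by
      rw [right_inr, Equiv.swap_inv]]
    rw [show (0 : Fin n → ZMod 2) k = 0 from rfl, sgn_zero, one_mul]
    rcases eq_or_ne k i with h | h
    · subst h
      rw [Equiv.swap_apply_left, Pi.single_eq_same, Pi.single_eq_of_ne hij]
      ring
    · rcases eq_or_ne k j with h2 | h2
      · subst h2
        rw [Equiv.swap_apply_right, Pi.single_eq_of_ne (Ne.symm hij), Pi.single_eq_same]
        ring
      · rw [Equiv.swap_apply_of_ne_of_ne h h2, Pi.single_eq_of_ne h, Pi.single_eq_of_ne h2]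
        ring

lemma dd_refl_le_one {r : CoxB n} (hr : r ∈ coxBRefl n) : dd r ≤ 1 := by
  obtain ⟨s, hs, g, rfl⟩ := hr
  have hgg : (rho g : Module.End ℚ (Fin n → ℚ)) * rho g⁻¹ = 1 := by
    rw [← map_mul, mul_inv_cancel, map_one]
  have h1 : ((rho (g * s * g⁻¹) : Module.End ℚ (Fin n → ℚ)) - 1)
      = (rho g : Module.End ℚ (Fin n → ℚ)) * ((rho s : Module.End ℚ (Fin n → ℚ)) - 1) * rho g⁻¹ := by
    rw [map_mul, map_mul]
    have hexp : (rho g : Module.End ℚ (Fin n → ℚ)) * ((rho s : Module.End ℚ (Fin n → ℚ)) - 1) * rho g⁻¹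
        = (rho g : Module.End ℚ (Fin n → ℚ)) * rho s * rho g⁻¹
          - (rho g : Module.End ℚ (Fin n → ℚ)) * rho g⁻¹ := by
      rw [mul_sub, mul_one, sub_mul]
    rw [hexp, hgg]
  unfold dd
  rw [h1]
  have step1 : LinearMap.range ((rho g : Module.End ℚ (Fin n → ℚ)) * ((rho s : Module.End ℚ (Fin n → ℚ)) - 1) * rho g⁻¹)
      ≤ LinearMap.range ((rho g : Module.End ℚ (Fin n → ℚ)) * ((rho s : Module.End ℚ (Fin n → ℚ)) - 1)) := by
    rw [Module.End.mul_eq_comp]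
    exact LinearMap.range_comp_le_range _ _
  calc Module.finrank ℚ (LinearMap.range ((rho g : Module.End ℚ (Fin n → ℚ)) * ((rho s : Module.End ℚ (Fin n → ℚ)) - 1) * rho g⁻¹))
      ≤ Module.finrank ℚ (LinearMap.range ((rho g : Module.End ℚ (Fin n → ℚ)) * ((rho s : Module.End ℚ (Fin n → ℚ)) - 1))) :=
        Submodule.finrank_mono step1
    _ = Module.finrank ℚ (Submodule.map (rho g : Module.End ℚ (Fin n → ℚ))
          (LinearMap.range ((rho s : Module.End ℚ (Fin n → ℚ)) - 1))) := by
        rw [Module.End.mul_eq_comp, LinearMap.range_comp]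
    _ ≤ Module.finrank ℚ (LinearMap.range ((rho s : Module.End ℚ (Fin n → ℚ)) - 1)) :=
        Submodule.finrank_map_le _ _
    _ ≤ 1 := dd_gens_le_one hs

lemma dd_list_le (l : List (CoxB n)) (hl : ∀ x ∈ l, x ∈ coxBRefl n) :
    dd l.prod ≤ l.length := by
  induction l with
  | nil => simpa [List.prod_nil] using le_of_eq dd_one
  | cons a t ih =>
    rw [List.prod_cons, List.length_cons]
    calc dd (a * t.prod) ≤ dd a + dd t.prod := dd_mul_le _ _
      _ ≤ 1 + t.length := by
          have h1 := dd_refl_le_one (hl a List.mem_cons_self)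
          have h2 := ih (fun x hx => hl x (List.mem_cons_of_mem a hx))
          omega
      _ = t.length + 1 := by omega

lemma dd_le_wordLength (g : CoxB n)
    (hg : ∃ l : List (CoxB n), (∀ x ∈ l, x ∈ coxBRefl n) ∧ l.prod = g) :
    dd g ≤ wordLength (coxBRefl n) g := by
  have hne : {k | ∃ l : List (CoxB n), l.length = k ∧ (∀ x ∈ l, x ∈ coxBRefl n) ∧ l.prod = g}.Nonempty := by
    obtain ⟨l, hl, hp⟩ := hg
    exact ⟨l.length, l, rfl, hl, hp⟩
  have hmem := Nat.sInf_mem hne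
  obtain ⟨l, hlen, hl, hp⟩ := hmem
  rw [wordLength, ← hlen, ← hp]
  exact dd_list_le l hl

end
end CoxBAux
namespace CoxBAux
noncomputable section
open SemidirectProduct Equiv

variable {n : ℕ}

lemma mem_refl_of_mem_gens {s : CoxB n} (hs : s ∈ coxBGens n) : s ∈ coxBRefl n :=
  ⟨s, hs, 1, by simp⟩

/-- every element admits a word in the reflections -/
lemma exists_word (g : CoxB n) :
    ∃ l : List (CoxB n), (∀ x ∈ l, x ∈ coxBRefl n) ∧ l.prod = g := by
  set P : CoxB n → Prop := fun g => ∃ l : List (CoxB n), (∀ x ∈ l, x ∈ coxBRefl n) ∧ l.prod = g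
    with hP
  have hone : P 1 := ⟨[], by simp, by simp⟩
  have hmul : ∀ a b, P a → P b → P (a * b) := by
    rintro a b ⟨la, hla, rfl⟩ ⟨lb, hlb, rfl⟩
    refine ⟨la ++ lb, ?_, by rw [List.prod_append]⟩
    intro x hx
    rcases List.mem_append.mp hx with h | h
    · exact hla x h
    · exact hlb x h
  have hrefl : ∀ s ∈ coxBRefl n, P s := fun s hs => ⟨[s], by simpa using hs, by simp⟩
  have hinr : ∀ σ : Equiv.Perm (Fin n), P (inr σ) := by
    intro σ
    refine Equiv.Perm.swap_induction_on σ ?_ ?_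
    · rw [map_one]; exact hone
    · intro f x y hxy ih
      rw [map_mul]
      exact hmul _ _ (hrefl _ (mem_refl_of_mem_gens (Or.inr ⟨x, y, hxy, rfl⟩))) ih
  have hinl : ∀ v : Multiplicative (Fin n → ZMod 2), P (inl v) := by
    intro v
    have hv : v = ∏ i : Fin n, ofAdd (Pi.single i (toAdd v i)) := by
      rw [← ofAdd_sum]
      have : (∑ i : Fin n, Pi.single i (toAdd v i)) = toAdd v := by
        funext j
        rw [Finset.sum_apply]
        exact Fintype.sum_pi_single j (toAdd v)
      rw [this]
      rfl
    rw [hv]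
    refine Finset.prod_induction _ (fun a => P (inl a)) ?_ ?_ ?_
    · intro a b ha hb
      show P (inl (a * b))
      rw [map_mul]
      exact hmul _ _ ha hb
    · show P (inl 1)
      rw [map_one]
      exact hone
    intro i _
    have hz : toAdd v i = 0 ∨ toAdd v i = 1 := by
      generalize toAdd v i = z; revert z; decide
    rcases hz with h | h
    · rw [h]
      have h0 : Pi.single i (0 : ZMod 2) = (0 : Fin n → ZMod 2) := Pi.single_zero i
      show P (inl (ofAdd (Pi.single i (0 : ZMod 2))))
      rw [h0, ofAdd_zero, map_one]
      exact hone
    · rw [h]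
      exact hrefl _ (mem_refl_of_mem_gens (Or.inl ⟨i, rfl⟩))
  have := hmul _ _ (hinl g.left) (hinr g.right)
  rwa [inl_left_mul_inr_right g] at this

lemma wordLength_w_le (m : ℕ) :
    wordLength (coxBRefl (m+2)) (coxBCoxeterElt m) ≤ m + 2 := by
  set L : List (CoxB (m+2)) :=
    (inl (ofAdd (Pi.single (0 : Fin (m+2)) (1 : ZMod 2))) : CoxB (m+2)) ::
      (List.finRange (m+1)).map
        (fun i => (inr (Equiv.swap i.castSucc i.succ) : CoxB (m+2))) with hL
  have hlen : L.length = m + 2 := by simp [hL]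
  have hprod : L.prod = coxBCoxeterElt m := by
    rw [hL, List.prod_cons]
    rfl
  have hmem : ∀ x ∈ L, x ∈ coxBRefl (m+2) := by
    intro x hx
    rcases List.mem_cons.mp hx with h | h
    · exact h ▸ mem_refl_of_mem_gens (Or.inl ⟨0, rfl⟩)
    · obtain ⟨i, _, rfl⟩ := List.mem_map.mp h
      exact mem_refl_of_mem_gens
        (Or.inr ⟨i.castSucc, i.succ, (Fin.castSucc_lt_succ (i := i)).ne, rfl⟩)
  exact Nat.sInf_le ⟨L, hlen, hmem, hprod⟩

end
end CoxBAux
namespace CoxBAux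
noncomputable section
open SemidirectProduct Equiv LinearMap

variable {n : ℕ}

lemma rho_fix_pow (g : CoxB n) (x : Fin n → ℚ)
    (hx : (rho g : Module.End ℚ (Fin n → ℚ)) x = x) (t : ℕ) :
    (rho (g^t) : Module.End ℚ (Fin n → ℚ)) x = x := by
  induction t with
  | zero => rw [pow_zero, map_one]; rfl
  | succ t ih => rw [pow_succ, map_mul, Module.End.mul_apply, hx, ih]

lemma rho_fix_inv (g : CoxB n) (x : Fin n → ℚ)
    (hx : (rho g : Module.End ℚ (Fin n → ℚ)) x = x) :
    (rho g⁻¹ : Module.End ℚ (Fin n → ℚ)) x = x := by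
  conv_lhs => rw [← hx]
  rw [← Module.End.mul_apply, ← map_mul, inv_mul_cancel, map_one]
  rfl

lemma rho_fix_zpow (g : CoxB n) (x : Fin n → ℚ)
    (hx : (rho g : Module.End ℚ (Fin n → ℚ)) x = x) (z : ℤ) :
    (rho (g^z) : Module.End ℚ (Fin n → ℚ)) x = x := by
  obtain ⟨t, rfl | rfl⟩ := z.eq_nat_or_neg
  · rw [zpow_natCast]; exact rho_fix_pow g x hx t
  · rw [zpow_neg, zpow_natCast]
    exact rho_fix_inv _ x (rho_fix_pow g x hx t)

lemma rho_faithful (g : CoxB n) (hg : (rho g : Module.End ℚ (Fin n → ℚ)) = 1) : g = 1 := by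
  have hval : ∀ x : Fin n → ℚ, ∀ i, sgn (toAdd g.left i) * x (g.right⁻¹ i) = x i := by
    intro x i
    have := congrFun (congrArg (fun f : Module.End ℚ (Fin n → ℚ) => f x) hg) i
    exact this
  have hleft : g.left = 1 := by
    refine Multiplicative.toAdd.injective (funext fun i => ?_)
    have := hval (fun _ => 1) i
    rw [mul_one] at this
    have hz : toAdd g.left i = 0 ∨ toAdd g.left i = 1 := by
      generalize toAdd g.left i = z; revert z; decide
    rcases hz with h | h
    · rw [h]; rfl
    · rw [h, sgn_one] at this; norm_num at this
  have hsgn1 : ∀ i, sgn (toAdd g.left i) = 1 := by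
    intro i
    rw [show toAdd g.left = toAdd (1 : Multiplicative (Fin n → ZMod 2)) from by rw [hleft]]
    rfl
  have hright : g.right = 1 := by
    rw [← inv_eq_one]
    apply Equiv.ext
    intro i
    have := hval (fun j => (j.val : ℚ)) i
    rw [hsgn1, one_mul, Nat.cast_inj] at this
    exact Fin.ext this
  rw [← inl_left_mul_inr_right g, hleft, hright, map_one, map_one, one_mul]

lemma ker_bot_of_odd (m : ℕ) (t : ℤ) (ht : Odd t) :
    LinearMap.ker ((rho ((coxBCoxeterElt m)^t) : Module.End ℚ (Fin (m+2) → ℚ)) - 1) = ⊥ := by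
  set w := coxBCoxeterElt m with hwdef
  rw [Submodule.eq_bot_iff]
  intro x hx
  rw [LinearMap.mem_ker, LinearMap.sub_apply, Module.End.one_apply, sub_eq_zero] at hx
  -- hx : rho (w^t) x = x
  set d : ℕ := Int.gcd t (2*(m+2)) with hd
  have h2n : w^((2*(m+2) : ℕ) : ℤ) = 1 := by
    rw [zpow_natCast, w_pow_2n]
  have hbez : (d : ℤ) = t * Int.gcdA t (2*(m+2)) + (2*(m+2)) * Int.gcdB t (2*(m+2)) :=
    Int.gcd_eq_gcd_ab t (2*(m+2))
  have hwd : w^((d : ℕ) : ℤ) = (w^t)^(Int.gcdA t (2*(m+2))) := by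
    rw [hbez, zpow_add, zpow_mul, zpow_mul]
    rw [show ((2*(m+2) : ℤ)) = ((2*(m+2) : ℕ) : ℤ) by push_cast; ring, h2n, one_zpow, mul_one]
  -- fixed by w^d
  have hfix_d : (rho (w^d) : Module.End ℚ (Fin (m+2) → ℚ)) x = x := by
    have := rho_fix_zpow (w^t) x hx (Int.gcdA t (2*(m+2)))
    rw [← hwd, zpow_natCast] at this
    exact this
  -- d divides m+2
  have hd_dvd_2n : d ∣ 2*(m+2) := by
    have h1 : (d : ℤ) ∣ ((2*(m+2) : ℕ) : ℤ) := by
      rw [show (((2*(m+2) : ℕ)) : ℤ) = (2*(m+2) : ℤ) by push_cast; ring]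
      exact Int.gcd_dvd_right _ _
    exact_mod_cast h1
  have hd_odd : Odd d := by
    rcases Nat.even_or_odd d with hev | hodd
    · exfalso
      have h2 : (2 : ℤ) ∣ (d : ℤ) := by
        obtain ⟨k, hk⟩ := hev
        exact ⟨k, by push_cast [hk]; ring⟩
      have h3 : (2 : ℤ) ∣ t := h2.trans (Int.gcd_dvd_left _ _)
      rw [← Int.not_even_iff_odd] at ht
      exact ht (even_iff_two_dvd.mpr h3)
    · exact hodd
  have hd_dvd_n : d ∣ (m+2) := by
    have hcop : Nat.Coprime d 2 := Nat.coprime_two_right.mpr hd_odd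
    exact hcop.dvd_of_dvd_mul_left hd_dvd_2n
  -- fixed by w^(m+2) = -1
  have hfix_n : (rho (w^(m+2)) : Module.End ℚ (Fin (m+2) → ℚ)) x = x := by
    have := rho_fix_pow (w^d) x hfix_d ((m+2)/d)
    rw [← pow_mul, Nat.mul_div_cancel' hd_dvd_n] at this
    exact this
  -- conclude x = 0
  funext i
  have := congrFun hfix_n i
  rw [hwdef, w_pow_n] at this
  have hneg : (rho (inl (ofAdd (fun _ => (1:ZMod 2)))) : Module.End ℚ (Fin (m+2) → ℚ)) x i = -x i := by
    rw [rho_apply]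
    rw [show toAdd ((inl (ofAdd (fun _ => (1:ZMod 2))) : CoxB (m+2))).left = (fun _ => (1:ZMod 2)) from rfl]
    rw [show ((inl (ofAdd (fun _ => (1:ZMod 2))) : CoxB (m+2))).right⁻¹ = 1 from rfl]
    rw [sgn_one]
    show -1 * x i = -x i
    ring
  rw [hneg] at this
  have : x i = 0 := by linarith
  exact this

end
end CoxBAux

/-- In the interval `[1, w]` of the type `B_n` Coxeter group (`n = m + 2 ≥ 2`) with respect to
its reflection generating set `R`, the only elements commuting with the Coxeter element `w`
are `1` and `w`. -/
theorem coxB_commuting_with_w (m : ℕ) (u : CoxB (m + 2))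
    (hu : wordLength (coxBRefl (m + 2)) u +
        wordLength (coxBRefl (m + 2)) (u⁻¹ * coxBCoxeterElt m) =
        wordLength (coxBRefl (m + 2)) (coxBCoxeterElt m))
    (hcomm : u * coxBCoxeterElt m = coxBCoxeterElt m * u) :
    u = 1 ∨ u = coxBCoxeterElt m := by
  classical
  open CoxBAux in
  set w := coxBCoxeterElt m with hwdef
  set v : CoxB (m+2) := u⁻¹ * w with hvdef
  have hw_uv : w = u * v := by rw [hvdef, mul_inv_cancel_left]
  -- rank inequalities
  have h1 : CoxBAux.dd w ≤ CoxBAux.dd u + CoxBAux.dd v := hw_uv ▸ CoxBAux.dd_mul_le u v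
  have h2 : CoxBAux.dd u ≤ wordLength (coxBRefl (m+2)) u :=
    CoxBAux.dd_le_wordLength u (CoxBAux.exists_word u)
  have h3 : CoxBAux.dd v ≤ wordLength (coxBRefl (m+2)) v :=
    CoxBAux.dd_le_wordLength v (CoxBAux.exists_word v)
  have h4 : wordLength (coxBRefl (m+2)) w ≤ m + 2 := CoxBAux.wordLength_w_le m
  -- dd w = m + 2
  have hkerw : LinearMap.ker ((CoxBAux.rho w : Module.End ℚ (Fin (m+2) → ℚ)) - 1) = ⊥ := by
    have := CoxBAux.ker_bot_of_odd m 1 odd_one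
    rwa [zpow_one] at this
  have hfrk : Module.finrank ℚ (Fin (m+2) → ℚ) = m + 2 := Module.finrank_fin_fun ℚ
  have hrnw := LinearMap.finrank_range_add_finrank_ker
    ((CoxBAux.rho w : Module.End ℚ (Fin (m+2) → ℚ)) - 1)
  rw [hkerw, finrank_bot, hfrk] at hrnw
  have hddw : CoxBAux.dd w = m + 2 := by
    unfold CoxBAux.dd
    omega
  -- squeeze
  have hsum : CoxBAux.dd u + CoxBAux.dd v = m + 2 := by omega
  -- kernels
  have hrnu := LinearMap.finrank_range_add_finrank_ker
    ((CoxBAux.rho u : Module.End ℚ (Fin (m+2) → ℚ)) - 1)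
  have hrnv := LinearMap.finrank_range_add_finrank_ker
    ((CoxBAux.rho v : Module.End ℚ (Fin (m+2) → ℚ)) - 1)
  rw [hfrk] at hrnu hrnv
  have hkersum :
      Module.finrank ℚ (LinearMap.ker ((CoxBAux.rho u : Module.End ℚ (Fin (m+2) → ℚ)) - 1)) +
      Module.finrank ℚ (LinearMap.ker ((CoxBAux.rho v : Module.End ℚ (Fin (m+2) → ℚ)) - 1)) = m + 2 := by
    unfold CoxBAux.dd at hsum
    omega
  -- u is a power of w
  obtain ⟨j, hj⟩ := CoxBAux.commute_w_eq_pow u hcomm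
  have hvz : v = w^((1 : ℤ) - (j : ℤ)) := by
    have hc : ((w^j)⁻¹ : CoxB (m+2)) * w = w * (w^j)⁻¹ :=
      (((Commute.refl w).pow_right j).inv_right).eq.symm
    rw [hvdef, hj, hc, zpow_sub, zpow_one, zpow_natCast]
  rcases Int.even_or_odd (j : ℤ) with hev | hodd
  · -- j even : 1 - j odd, v has trivial fixed space... then u = 1
    left
    have hkv : LinearMap.ker ((CoxBAux.rho v : Module.End ℚ (Fin (m+2) → ℚ)) - 1) = ⊥ := by
      have := CoxBAux.ker_bot_of_odd m (1 - (j:ℤ)) (odd_one.sub_even hev)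
      rwa [← hvz] at this
    rw [hkv, finrank_bot] at hkersum
    have hktop : LinearMap.ker ((CoxBAux.rho u : Module.End ℚ (Fin (m+2) → ℚ)) - 1) = ⊤ :=
      Submodule.eq_top_of_finrank_eq (by omega)
    have hzero : ((CoxBAux.rho u : Module.End ℚ (Fin (m+2) → ℚ)) - 1) = 0 :=
      LinearMap.ker_eq_top.mp hktop
    exact CoxBAux.rho_faithful u (by rwa [sub_eq_zero] at hzero)
  · -- j odd : u has trivial fixed space, so v = 1 and u = w
    right
    have hku : LinearMap.ker ((CoxBAux.rho u : Module.End ℚ (Fin (m+2) → ℚ)) - 1) = ⊥ := by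
      have := CoxBAux.ker_bot_of_odd m (j : ℤ) hodd
      rw [zpow_natCast, ← hj] at this
      exact this
    rw [hku, finrank_bot] at hkersum
    have hktop : LinearMap.ker ((CoxBAux.rho v : Module.End ℚ (Fin (m+2) → ℚ)) - 1) = ⊤ :=
      Submodule.eq_top_of_finrank_eq (by omega)
    have hzero : ((CoxBAux.rho v : Module.End ℚ (Fin (m+2) → ℚ)) - 1) = 0 :=
      LinearMap.ker_eq_top.mp hktop
    have hv1 : v = 1 := CoxBAux.rho_faithful v (by rwa [sub_eq_zero] at hzero)
    rw [hvdef] at hv1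
    have := congrArg (fun x => u * x) hv1
    simpa [mul_inv_cancel_left] using this.symm
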